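/- For all real numbers a, b and every real p with 1 < p ≤ 2, one has |(a-b)/2|^p + |(a+b)/2|^p ≤ 2^(1-p) (|a|^p + |b|^p). -/
import Mathlib

private lemma rpow_add_le_add_rpow_real (x y : ℝ) (hx : 0 ≤ x) (hy : 0 ≤ y) {q : ℝ}
    (h0 : 0 ≤ q) (h1 : q ≤ 1) : (x + y) ^ q ≤ x ^ q + y ^ q := by
  have := NNReal.rpow_add_le_add_rpow ⟨x, hx⟩ ⟨y, hy⟩ h0 h1
  exact_mod_cast this

/-- Clarkson-type inequality, case `1 < p ≤ 2`. -/
theorem clarkson_le_two (a b p : ℝ) (hp1 : 1 < p) (hp2 : p ≤ 2) :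
    |(a - b) / 2| ^ p + |(a + b) / 2| ^ p ≤ 2 ^ (1 - p) * (|a| ^ p + |b| ^ p) := by
  have hp0 : (0:ℝ) < p := zero_lt_one.trans hp1
  set u := |(a - b) / 2| with hu
  set v := |(a + b) / 2| with hv
  have hu0 : 0 ≤ u := abs_nonneg _
  have hv0 : 0 ≤ v := abs_nonneg _
  have hq : 1 ≤ 2 / p := (one_le_div hp0).mpr hp2
  have h1 := Real.arith_mean_le_rpow_mean (Finset.univ : Finset (Fin 2)) ![1/2, 1/2]
      ![u ^ p, v ^ p] (by intro i _; fin_cases i <;> norm_num)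
      (by simp [Fin.sum_univ_two]; norm_num)
      (by intro i _; fin_cases i <;> simp <;> positivity) hq
  simp only [Fin.sum_univ_two, Matrix.cons_val_zero, Matrix.cons_val_one, Matrix.head_cons] at h1
  have e1 : (u ^ p) ^ (2/p) = u ^ (2:ℝ) := by
    rw [← Real.rpow_mul hu0]; congr 1; field_simp
  have e2 : (v ^ p) ^ (2/p) = v ^ (2:ℝ) := by
    rw [← Real.rpow_mul hv0]; congr 1; field_simp
  have e3 : (1:ℝ)/2 * u ^ (2:ℝ) + 1/2 * v ^ (2:ℝ) = (a^2 + b^2)/4 := by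
    rw [Real.rpow_two, Real.rpow_two, hu, hv, sq_abs, sq_abs]; ring
  rw [e1, e2, e3, one_div_div] at h1
  -- h1 : 1/2 * u^p + 1/2 * v^p ≤ ((a^2+b^2)/4) ^ (p/2)
  have h2 : ((a^2 + b^2)/4) ^ (p/2) ≤ (|a| ^ p + |b| ^ p) / 2 ^ p := by
    have hsub : (a^2 + b^2) ^ (p/2) ≤ |a| ^ p + |b| ^ p := by
      have := rpow_add_le_add_rpow_real (q := p/2) (a^2) (b^2) (sq_nonneg a) (sq_nonneg b)
        (by positivity) (by linarith)
      calc (a^2 + b^2) ^ (p/2) ≤ (a^2) ^ (p/2) + (b^2) ^ (p/2) := this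
        _ = |a| ^ p + |b| ^ p := by
            rw [← sq_abs a, ← sq_abs b, ← Real.rpow_two, ← Real.rpow_two,
              ← Real.rpow_mul (abs_nonneg a), ← Real.rpow_mul (abs_nonneg b)]
            have hpp : 2 * (p/2) = p := by ring
            rw [hpp]
    have h4 : ((a^2 + b^2)/4) ^ (p/2) = (a^2 + b^2) ^ (p/2) / 2 ^ p := by
      rw [Real.div_rpow (by positivity) (by norm_num)]
      congr 1
      rw [show (4:ℝ) = 2 ^ (2:ℝ) by norm_num [Real.rpow_two], ← Real.rpow_mul (by norm_num)]
      have hpp : 2 * (p/2) = p := by ring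
      rw [hpp]
    rw [h4]
    exact div_le_div_of_nonneg_right hsub (by positivity) |>.trans_eq rfl
  have h5 : (2:ℝ) ^ (1 - p) = 2 / 2 ^ p := by
    rw [Real.rpow_sub (by norm_num), Real.rpow_one]
  rw [h5]
  have h6 := h1.trans h2
  calc u ^ p + v ^ p = 2 * (1/2 * u ^ p + 1/2 * v ^ p) := by ring
    _ ≤ 2 * ((|a| ^ p + |b| ^ p) / 2 ^ p) := by linarith
    _ = 2 / 2 ^ p * (|a| ^ p + |b| ^ p) := by ring
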